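/- Let 0 < α < β < 1, let a ∈ ℝ, and let φ : ℝ → ℝ be a 2π-periodic function of class C^{1,β}. For t ≠ 0 set δ₋φ(s,t) = (φ(s) − φ(s−t))/|t| and δ₊φ(s,t) = (φ(s) − φ(s+t))/|t|, and let F₃(a,q,p) = ∫_0^1 ( 1 + a² (−p + (q+p)τ)² )^{−(2+α)/2} dτ. Then for every s ∈ ℝ the function t ↦ ( δ₋φ(s,t) + δ₊φ(s,t) ) · F₃(a, δ₋φ(s,t), δ₊φ(s,t)) · |t|^{−1−α} is Lebesgue integrable on ℝ, and, setting Φ₁(a,φ)(s) = (1/2) ∫_ℝ ( δ₋φ(s,t) + δ₊φ(s,t) ) F₃(a, δ₋φ(s,t), δ₊φ(s,t)) |t|^{−1−α} dt, there exists a constant C, depending only on α, β and an upper bound for |a| + ‖φ‖_{C^{1,β}}, such that ‖Φ₁(a,φ)‖_{L^∞(ℝ)} ≤ C and |Φ₁(a,φ)(s) − Φ₁(a,φ)(s̄)| ≤ C |s − s̄|^{β−α} for all s, s̄ ∈ ℝ. -/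

import Mathlib

open MeasureTheory Real

/-- First-order incremental quotient `δ₋φ(s,t) = (φ(s) − φ(s−t))/|t|`. -/
noncomputable def deltaMinus (φ : ℝ → ℝ) (s t : ℝ) : ℝ := (φ s - φ (s - t)) / |t|

/-- First-order incremental quotient `δ₊φ(s,t) = (φ(s) − φ(s+t))/|t|`. -/
noncomputable def deltaPlus (φ : ℝ → ℝ) (s t : ℝ) : ℝ := (φ s - φ (s + t)) / |t|

/-- `F₃(a,q,p) = ∫_0^1 (1 + a²(−p+(q+p)τ)²)^{−(2+α)/2} dτ`. -/
noncomputable def F3 (α a q p : ℝ) : ℝ :=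
  ∫ τ in (0:ℝ)..1, (1 + a ^ 2 * (-p + (q + p) * τ) ^ 2) ^ (-(2 + α) / 2)

/-- The integrand of the operator `Φ₁`. -/
noncomputable def Phi1Integrand (α a : ℝ) (φ : ℝ → ℝ) (s t : ℝ) : ℝ :=
  (deltaMinus φ s t + deltaPlus φ s t) *
    F3 α a (deltaMinus φ s t) (deltaPlus φ s t) * |t| ^ (-(1 + α))

/-- `Φ₁(a,φ)(s) = (1/2) ∫_ℝ (δ₋φ + δ₊φ) F₃(a, δ₋φ, δ₊φ) |t|^{−1−α} dt`. -/
noncomputable def Phi1 (α a : ℝ) (φ : ℝ → ℝ) (s : ℝ) : ℝ :=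
  (1 / 2) * ∫ t : ℝ, Phi1Integrand α a φ s t


open Set

lemma evenIntegrableOn {f : ℝ → ℝ} (hf : ∀ x, f (-x) = f x) {s : Set ℝ}
    (h : IntegrableOn f s) : IntegrableOn f ((fun x : ℝ => -x) ⁻¹' s) := by
  have m : MeasurableEmbedding fun x : ℝ => -x := (Homeomorph.neg ℝ).measurableEmbedding
  rw [← Measure.map_neg_eq_self (volume : Measure ℝ)] at h
  rw [m.integrableOn_map_iff] at h
  simpa [Function.comp_def, hf] using h

lemma compl_Ioo' (a b : ℝ) : (Ioo a b)ᶜ = Iic a ∪ Ici b := by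
  ext x; simp only [mem_compl_iff, mem_Ioo, not_and_or, not_lt, mem_union, mem_Iic, mem_Ici]

lemma integrableOn_singleton' (f : ℝ → ℝ) (x : ℝ) : IntegrableOn f {x} := by
  rw [IntegrableOn, Measure.restrict_eq_zero.mpr (by simp)]
  exact integrable_zero_measure

lemma i1 (c r : ℝ) (hc : -1 < c) (hr : 0 < r) :
    IntegrableOn (fun t : ℝ => |t| ^ c) (Ioo (-r) r) ∧
      ∫ t in Ioo (-r) r, |t| ^ c = 2 * (r ^ (c + 1) / (c + 1)) := by
  have hIoc : IntegrableOn (fun t : ℝ => |t| ^ c) (Ioc 0 r) := by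
    have := (intervalIntegral.intervalIntegrable_rpow' (a := 0) (b := r) hc)
    rw [intervalIntegrable_iff_integrableOn_Ioc_of_le hr.le] at this
    exact this.congr_fun (fun x hx => by rw [abs_of_pos hx.1]) measurableSet_Ioc
  have hIco : IntegrableOn (fun t : ℝ => |t| ^ c) (Ico 0 r) := by
    have : Ico (0:ℝ) r ⊆ {0} ∪ Ioc 0 r := by
      intro x hx
      rcases eq_or_lt_of_le hx.1 with h | h
      · exact Or.inl (by simp [← h])
      · exact Or.inr ⟨h, hx.2.le⟩
    exact (((integrableOn_singleton' _ 0).union hIoc).mono this le_rfl)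
  have hneg : IntegrableOn (fun t : ℝ => |t| ^ c) (Ioc (-r) 0) := by
    have := evenIntegrableOn (f := fun t : ℝ => |t| ^ c) (by intro x; simp) hIco
    have hpre : (fun x : ℝ => -x) ⁻¹' Ico 0 r = Ioc (-r) 0 := by
      ext x; simp only [mem_preimage, mem_Ico, mem_Ioc]
      constructor
      · rintro ⟨h1, h2⟩; constructor <;> linarith
      · rintro ⟨h1, h2⟩; constructor <;> linarith
    rwa [hpre] at this
  have hint : IntegrableOn (fun t : ℝ => |t| ^ c) (Ioo (-r) r) := by
    refine ((hneg.union hIoc).mono ?_ le_rfl)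
    intro x hx
    rcases le_or_gt x 0 with h | h
    · exact Or.inl ⟨hx.1, h⟩
    · exact Or.inr ⟨h, hx.2.le⟩
  refine ⟨hint, ?_⟩
  have hdisj : Disjoint (Ioc (-r) 0) (Ioc (0:ℝ) r) := by
    rw [Set.disjoint_iff]; rintro x ⟨h1, h2⟩; exact absurd h2.1 (not_lt.2 h1.2)
  have h0 := setIntegral_union hdisj measurableSet_Ioc hneg hIoc
  rw [show Ioc (-r) 0 ∪ Ioc 0 r = Ioc (-r) r from Ioc_union_Ioc_eq_Ioc (by linarith) hr.le] at h0
  have hpos : ∫ t in Ioc 0 r, |t| ^ c = r ^ (c + 1) / (c + 1) := by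
    rw [show (∫ t in Ioc 0 r, |t| ^ c) = ∫ t in (0:ℝ)..r, |t| ^ c by
      rw [intervalIntegral.integral_of_le hr.le]]
    rw [intervalIntegral.integral_congr (g := fun t : ℝ => t ^ c)
      (fun x hx => by rw [Set.uIcc_of_le hr.le] at hx; simp only; rw [abs_of_nonneg hx.1])]
    rw [integral_rpow (Or.inl hc)]
    simp [Real.zero_rpow (by linarith : c + 1 ≠ 0)]
  have hneg' : ∫ t in Ioc (-r) 0, |t| ^ c = r ^ (c + 1) / (c + 1) := by
    have h2 : ∫ t in Ioc (-r) 0, |t| ^ c = ∫ t in (-r)..(0:ℝ), |t| ^ c := by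
      rw [intervalIntegral.integral_of_le (by linarith)]
    have h3 := intervalIntegral.integral_comp_neg (a := (0:ℝ)) (b := r) (fun t : ℝ => |t| ^ c)
    simp only [abs_neg, neg_zero] at h3
    rw [h2, ← h3, ← hpos, intervalIntegral.integral_of_le hr.le]
  rw [← integral_Ioc_eq_integral_Ioo, h0, hpos, hneg']; ring

lemma i2 (d r : ℝ) (hd : d < -1) (hr : 0 < r) :
    IntegrableOn (fun t : ℝ => |t| ^ d) (Ioo (-r) r)ᶜ ∧
      ∫ t in (Ioo (-r) r)ᶜ, |t| ^ d = 2 * (r ^ (d + 1) / (-(d + 1))) := by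
  have hIci : IntegrableOn (fun t : ℝ => |t| ^ d) (Ici r) := by
    rw [integrableOn_Ici_iff_integrableOn_Ioi]
    exact (integrableOn_Ioi_rpow_of_lt hd hr).congr_fun
      (fun x hx => by rw [abs_of_pos (hr.trans hx)]) measurableSet_Ioi
  have hIic : IntegrableOn (fun t : ℝ => |t| ^ d) (Iic (-r)) := by
    have := evenIntegrableOn (f := fun t : ℝ => |t| ^ d) (by intro x; simp) hIci
    have hpre : (fun x : ℝ => -x) ⁻¹' Ici r = Iic (-r) := by
      ext x; simp only [mem_preimage, mem_Ici, mem_Iic]; constructor <;> intro <;> linarith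
    rwa [hpre] at this
  have hint : IntegrableOn (fun t : ℝ => |t| ^ d) (Ioo (-r) r)ᶜ := by
    rw [compl_Ioo']; exact hIic.union hIci
  refine ⟨hint, ?_⟩
  have hIciv : ∫ t in Ici r, |t| ^ d = r ^ (d + 1) / (-(d + 1)) := by
    rw [integral_Ici_eq_integral_Ioi,
      setIntegral_congr_fun measurableSet_Ioi
        (fun x (hx : x ∈ Ioi r) => by rw [abs_of_pos (hr.trans hx)]),
      integral_Ioi_rpow_of_lt hd hr]
    rw [div_neg, neg_div]
  have hIicv : ∫ t in Iic (-r), |t| ^ d = r ^ (d + 1) / (-(d + 1)) := by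
    have h3 := integral_comp_neg_Iic (-r) (fun t : ℝ => |t| ^ d)
    simp only [abs_neg, neg_neg] at h3
    rw [h3, ← integral_Ici_eq_integral_Ioi] at *
    exact hIciv
  have hdisj : Disjoint (Iic (-r)) (Ici r) := by
    rw [Set.disjoint_iff]; rintro x ⟨h1, h2⟩
    exact absurd (lt_of_lt_of_le (by linarith : (-r:ℝ) < r) h2) (not_lt.2 h1)
  rw [compl_Ioo', setIntegral_union hdisj measurableSet_Ici hIic hIci, hIicv, hIciv]; ring

lemma base_pos (a Z : ℝ) : (0:ℝ) < 1 + a ^ 2 * Z ^ 2 := by positivity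

lemma kernel_lip (α a : ℝ) (hα : 0 < α) (X Y : ℝ) :
    |(1 + a ^ 2 * X ^ 2) ^ (-(2 + α) / 2) - (1 + a ^ 2 * Y ^ 2) ^ (-(2 + α) / 2)| ≤
      ((2 + α) * |a|) * |X - Y| := by
  set e : ℝ := -(2 + α) / 2 with he
  have hderiv : ∀ x : ℝ, HasDerivAt (fun X : ℝ => (1 + a ^ 2 * X ^ 2) ^ e)
      ((a ^ 2 * (2 * x ^ 1)) * e * (1 + a ^ 2 * x ^ 2) ^ (e - 1)) x := by
    intro x
    have hu : HasDerivAt (fun X : ℝ => 1 + a ^ 2 * X ^ 2) (a ^ 2 * (2 * x ^ 1)) x :=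
      ((hasDerivAt_pow 2 x).const_mul (a ^ 2)).const_add 1
    exact hu.rpow_const (Or.inl (base_pos a x).ne')
  have hbound : ∀ x : ℝ, ‖(a ^ 2 * (2 * x ^ 1)) * e * (1 + a ^ 2 * x ^ 2) ^ (e - 1)‖ ≤
      (2 + α) * |a| := by
    intro x
    set u : ℝ := 1 + a ^ 2 * x ^ 2 with hu
    have hu1 : (1:ℝ) ≤ u := by nlinarith [sq_nonneg (a * x)]
    have hu0 : (0:ℝ) < u := lt_of_lt_of_le one_pos hu1
    have hP : (0:ℝ) ≤ u ^ (e - 1) := Real.rpow_nonneg hu0.le _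
    have he' : |e| = (2 + α) / 2 := by
      rw [he, abs_div, abs_neg, abs_of_nonneg (by linarith : (0:ℝ) ≤ 2 + α), abs_two]
    have habs : ‖(a ^ 2 * (2 * x ^ 1)) * e * u ^ (e - 1)‖ =
        (2 + α) * (a ^ 2 * |x|) * u ^ (e - 1) := by
      rw [Real.norm_eq_abs, abs_mul, abs_mul, abs_of_nonneg hP, he']
      have : |a ^ 2 * (2 * x ^ 1)| = a ^ 2 * (2 * |x|) := by
        rw [abs_mul, abs_of_nonneg (sq_nonneg a), abs_mul, abs_two, abs_pow, pow_one]
      rw [this]; ring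
    rw [habs]
    have key : a ^ 2 * |x| * u ^ (e - 1) ≤ |a| := by
      have h2 : |a| * |x| ≤ u ^ ((1:ℝ)/2) := by
        rw [show u ^ ((1:ℝ)/2) = Real.sqrt u from (Real.sqrt_eq_rpow u).symm, ← abs_mul]
        rw [Real.le_sqrt (abs_nonneg _) hu0.le]
        calc |a * x| ^ 2 = a ^ 2 * x ^ 2 := by rw [sq_abs]; ring
        _ ≤ u := by linarith
      have h3 : a ^ 2 * |x| * u ^ (e - 1) = |a| * (|a| * |x|) * u ^ (e - 1) := by
        rw [← sq_abs a]; ring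
      rw [h3]
      calc |a| * (|a| * |x|) * u ^ (e - 1) ≤ |a| * u ^ ((1:ℝ)/2) * u ^ (e - 1) := by
            apply mul_le_mul_of_nonneg_right _ hP
            exact mul_le_mul_of_nonneg_left h2 (abs_nonneg a)
      _ = |a| * u ^ ((1:ℝ)/2 + (e - 1)) := by rw [mul_assoc, ← Real.rpow_add hu0]
      _ ≤ |a| * 1 := by
            apply mul_le_mul_of_nonneg_left _ (abs_nonneg a)
            apply Real.rpow_le_one_of_one_le_of_nonpos hu1
            rw [he]; linarith
      _ = |a| := mul_one _
    calc (2 + α) * (a ^ 2 * |x|) * u ^ (e - 1) = (2 + α) * (a ^ 2 * |x| * u ^ (e - 1)) := by ring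
    _ ≤ (2 + α) * |a| := mul_le_mul_of_nonneg_left key (by linarith)
  have := Convex.norm_image_sub_le_of_norm_hasDerivWithin_le
    (f := fun X : ℝ => (1 + a ^ 2 * X ^ 2) ^ e)
    (f' := fun x => (a ^ 2 * (2 * x ^ 1)) * e * (1 + a ^ 2 * x ^ 2) ^ (e - 1))
    (fun x _ => (hderiv x).hasDerivWithinAt) (fun x _ => hbound x)
    convex_univ (mem_univ Y) (mem_univ X)
  simpa [Real.norm_eq_abs] using this

lemma kernel_cont (α a q p : ℝ) :
    Continuous (fun τ : ℝ => (1 + a ^ 2 * (-p + (q + p) * τ) ^ 2) ^ (-(2 + α) / 2)) := by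
  apply Continuous.rpow_const
  · continuity
  · exact fun τ => Or.inl (base_pos a _).ne'

lemma F3_abs_le_one (α a q p : ℝ) (hα : 0 < α) : |F3 α a q p| ≤ 1 := by
  have h := intervalIntegral.norm_integral_le_of_norm_le_const
    (C := 1) (f := fun τ : ℝ => (1 + a ^ 2 * (-p + (q + p) * τ) ^ 2) ^ (-(2 + α) / 2))
    (a := (0:ℝ)) (b := 1) ?_
  · simpa [F3, Real.norm_eq_abs] using h
  · intro x _
    rw [Real.norm_eq_abs, abs_of_nonneg (Real.rpow_nonneg (base_pos a _).le _)]
    apply Real.rpow_le_one_of_one_le_of_nonpos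
    · nlinarith [sq_nonneg (a * (-p + (q + p) * x)), sq_nonneg a, sq_nonneg (-p + (q+p)*x)]
    · linarith

lemma F3_lip (α a : ℝ) (hα : 0 < α) (q p q' p' : ℝ) :
    |F3 α a q p - F3 α a q' p'| ≤ ((2 + α) * |a|) * (2 * (|q - q'| + |p - p'|)) := by
  have hint : ∀ q p : ℝ, IntervalIntegrable
      (fun τ : ℝ => (1 + a ^ 2 * (-p + (q + p) * τ) ^ 2) ^ (-(2 + α) / 2)) volume 0 1 :=
    fun q p => (kernel_cont α a q p).intervalIntegrable 0 1
  have hsub : F3 α a q p - F3 α a q' p' = ∫ τ in (0:ℝ)..1,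
      ((1 + a ^ 2 * (-p + (q + p) * τ) ^ 2) ^ (-(2 + α) / 2) -
        (1 + a ^ 2 * (-p' + (q' + p') * τ) ^ 2) ^ (-(2 + α) / 2)) := by
    rw [F3, F3, ← intervalIntegral.integral_sub (hint q p) (hint q' p')]
  rw [hsub]
  have h := intervalIntegral.norm_integral_le_of_norm_le_const
    (C := ((2 + α) * |a|) * (2 * (|q - q'| + |p - p'|)))
    (f := fun τ : ℝ => ((1 + a ^ 2 * (-p + (q + p) * τ) ^ 2) ^ (-(2 + α) / 2) -
        (1 + a ^ 2 * (-p' + (q' + p') * τ) ^ 2) ^ (-(2 + α) / 2)))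
    (a := (0:ℝ)) (b := 1) ?_
  · simpa [Real.norm_eq_abs] using h
  · intro x hx
    rw [Set.uIoc_of_le (by norm_num : (0:ℝ) ≤ 1)] at hx
    rw [Real.norm_eq_abs]
    calc |(1 + a ^ 2 * (-p + (q + p) * x) ^ 2) ^ (-(2 + α) / 2) -
        (1 + a ^ 2 * (-p' + (q' + p') * x) ^ 2) ^ (-(2 + α) / 2)|
        ≤ ((2 + α) * |a|) * |(-p + (q + p) * x) - (-p' + (q' + p') * x)| :=
          kernel_lip α a hα _ _
      _ ≤ ((2 + α) * |a|) * (2 * (|q - q'| + |p - p'|)) := by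
          apply mul_le_mul_of_nonneg_left _ (by positivity)
          have hxe : (-p + (q + p) * x) - (-p' + (q' + p') * x) =
              -(p - p') + ((q - q') + (p - p')) * x := by ring
          rw [hxe]
          calc |(-(p - p') + ((q - q') + (p - p')) * x)|
              ≤ |p - p'| + |(q - q') + (p - p')| * |x| := by
                calc |(-(p - p') + ((q - q') + (p - p')) * x)| ≤ |(-(p-p'))| + |((q - q') + (p - p')) * x| := abs_add_le _ _
                _ = |p - p'| + |(q - q') + (p - p')| * |x| := by rw [abs_neg, abs_mul]
            _ ≤ |p - p'| + (|q - q'| + |p - p'|) * 1 := by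
                have h1 : |(q - q') + (p - p')| ≤ |q - q'| + |p - p'| := abs_add_le _ _
                have h2 : |x| ≤ 1 := by
                  rw [abs_of_pos hx.1]; exact hx.2
                have := mul_le_mul h1 h2 (abs_nonneg x) (by positivity)
                linarith
            _ ≤ 2 * (|q - q'| + |p - p'|) := by
                have := abs_nonneg (q - q'); linarith

lemma integral_deriv' (φ : ℝ → ℝ) (hφ : ContDiff ℝ 1 φ) (x y : ℝ) :
    ∫ u in x..y, deriv φ u = φ y - φ x :=
  intervalIntegral.integral_deriv_eq_sub
    (fun u _ => hφ.differentiable one_ne_zero u)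
    ((hφ.continuous_deriv le_rfl).intervalIntegrable x y)

lemma second_diff_bound (φ : ℝ → ℝ) (hφ : ContDiff ℝ 1 φ) (K₂ β : ℝ)
    (hK₂ : ∀ u v, |deriv φ u - deriv φ v| ≤ K₂ * |u - v| ^ β) (s t : ℝ) :
    |(φ s - φ (s - t)) + (φ s - φ (s + t))| ≤ K₂ * |t| ^ β * |t| := by
  have hc : Continuous (deriv φ) := hφ.continuous_deriv le_rfl
  have hct : Continuous (fun u : ℝ => deriv φ (u - t)) := hc.comp (continuous_sub_right t)
  have h1 : ∫ u in s..(s + t), deriv φ (u - t) = φ s - φ (s - t) := by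
    rw [intervalIntegral.integral_comp_sub_right (fun u => deriv φ u) t]
    simp only [add_sub_cancel_right]
    exact integral_deriv' φ hφ (s - t) s
  have h2 : ∫ u in s..(s + t), deriv φ u = φ (s + t) - φ s := integral_deriv' φ hφ s (s + t)
  have hid : (φ s - φ (s - t)) + (φ s - φ (s + t)) =
      ∫ u in s..(s + t), (deriv φ (u - t) - deriv φ u) := by
    rw [intervalIntegral.integral_sub (hct.intervalIntegrable _ _) (hc.intervalIntegrable _ _)]
    rw [h1, h2]; ring
  rw [hid]
  have h := intervalIntegral.norm_integral_le_of_norm_le_const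
    (C := K₂ * |t| ^ β) (f := fun u => deriv φ (u - t) - deriv φ u) (a := s) (b := s + t)
    (fun x _ => by
      rw [Real.norm_eq_abs]
      have := hK₂ (x - t) x
      simpa [abs_neg] using this)
  rw [Real.norm_eq_abs] at h
  exact h.trans_eq (by rw [add_sub_cancel_left])

lemma first_diff_bound (φ : ℝ → ℝ) (hφ : ContDiff ℝ 1 φ) (M : ℝ) (t : ℝ)
    (hM : ∀ u, |deriv φ u - deriv φ (u - t)| ≤ M) (s s' : ℝ) :
    |(φ s - φ (s - t)) - (φ s' - φ (s' - t))| ≤ M * |s - s'| := by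
  have hc : Continuous (deriv φ) := hφ.continuous_deriv le_rfl
  have hct : Continuous (fun u : ℝ => deriv φ (u - t)) := hc.comp (continuous_sub_right t)
  have h1 : ∫ u in s'..s, deriv φ (u - t) = φ (s - t) - φ (s' - t) := by
    rw [intervalIntegral.integral_comp_sub_right (fun u => deriv φ u) t]
    exact integral_deriv' φ hφ (s' - t) (s - t)
  have h2 : ∫ u in s'..s, deriv φ u = φ s - φ s' := integral_deriv' φ hφ s' s
  have hid : (φ s - φ (s - t)) - (φ s' - φ (s' - t)) =
      ∫ u in s'..s, (deriv φ u - deriv φ (u - t)) := by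
    rw [intervalIntegral.integral_sub (hc.intervalIntegrable _ _) (hct.intervalIntegrable _ _)]
    rw [h1, h2]; ring
  rw [hid]
  have h := intervalIntegral.norm_integral_le_of_norm_le_const
    (C := M) (f := fun u => deriv φ u - deriv φ (u - t)) (a := s') (b := s)
    (fun x _ => by rw [Real.norm_eq_abs]; exact hM x)
  rw [Real.norm_eq_abs] at h
  exact h

lemma aesm_of_contOn (g : ℝ → ℝ) (hg : ContinuousOn g {(0:ℝ)}ᶜ) :
    AEStronglyMeasurable g volume := by
  have h1 := hg.aestronglyMeasurable (μ := volume) (measurableSet_singleton (0:ℝ)).compl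
  rwa [Measure.restrict_congr_set (ae_eq_univ.2 (by simp)), Measure.restrict_univ] at h1

lemma ae_ne_zero : ∀ᵐ t : ℝ, t ≠ 0 := by
  refine ae_iff.2 ?_
  simp only [ne_eq, not_not]
  have : {a : ℝ | a = 0} = {(0:ℝ)} := by ext x; simp
  rw [this]
  exact Real.volume_singleton

lemma F3_cont (α a : ℝ) (hα : 0 < α) : Continuous (fun z : ℝ × ℝ => F3 α a z.1 z.2) := by
  have hL : (0:ℝ) ≤ (2 + α) * |a| * 4 := by positivity
  have : LipschitzWith (Real.toNNReal ((2 + α) * |a| * 4))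
      (fun z : ℝ × ℝ => F3 α a z.1 z.2) := by
    apply LipschitzWith.of_dist_le_mul
    intro z z'
    have h := F3_lip α a hα z.1 z.2 z'.1 z'.2
    rw [Real.coe_toNNReal _ hL, Real.dist_eq]
    have hd1 : |z.1 - z'.1| ≤ dist z z' := by
      rw [← Real.dist_eq, Prod.dist_eq]; exact le_max_left _ _
    have hd2 : |z.2 - z'.2| ≤ dist z z' := by
      rw [← Real.dist_eq, Prod.dist_eq]; exact le_max_right _ _
    have h2 : ((2 + α) * |a|) * (2 * (|z.1 - z'.1| + |z.2 - z'.2|)) ≤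
        (2 + α) * |a| * 4 * dist z z' := by
      have : (0:ℝ) ≤ (2 + α) * |a| := by positivity
      nlinarith [dist_nonneg (x := z) (y := z')]
    exact h.trans h2
  exact this.continuous

lemma bound_on_Ioo (c M r : ℝ) (hc : -1 < c) (hM : 0 ≤ M) (hr : 0 < r) (g : ℝ → ℝ)
    (h1 : ∀ t : ℝ, t ≠ 0 → |g t| ≤ M * |t| ^ c)
    (hint : IntegrableOn g (Ioo (-r) r)) :
    |∫ t in Ioo (-r) r, g t| ≤ M * (2 * (r ^ (c + 1) / (c + 1))) := by
  obtain ⟨i1int, i1val⟩ := i1 c r hc hr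
  have hb1 : ∀ᵐ t ∂(volume.restrict (Ioo (-r) r)), ‖g t‖ ≤ M * |t| ^ c := by
    filter_upwards [ae_restrict_of_ae ae_ne_zero] with t ht0
    rw [Real.norm_eq_abs]; exact h1 t ht0
  have := norm_integral_le_of_norm_le (i1int.const_mul M) hb1
  rw [Real.norm_eq_abs] at this
  rwa [integral_const_mul, i1val] at this

lemma bound_on_compl (d M r : ℝ) (hd : d < -1) (hM : 0 ≤ M) (hr : 0 < r) (g : ℝ → ℝ)
    (h2 : ∀ t : ℝ, t ∈ (Ioo (-r) r)ᶜ → |g t| ≤ M * |t| ^ d)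
    (hint : IntegrableOn g (Ioo (-r) r)ᶜ) :
    |∫ t in (Ioo (-r) r)ᶜ, g t| ≤ M * (2 * (r ^ (d + 1) / (-(d + 1)))) := by
  obtain ⟨i2int, i2val⟩ := i2 d r hd hr
  have hb2 : ∀ᵐ t ∂(volume.restrict (Ioo (-r) r)ᶜ), ‖g t‖ ≤ M * |t| ^ d := by
    filter_upwards [ae_restrict_mem measurableSet_Ioo.compl] with t ht
    rw [Real.norm_eq_abs]; exact h2 t ht
  have := norm_integral_le_of_norm_le (i2int.const_mul M) hb2
  rw [Real.norm_eq_abs] at this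
  rwa [integral_const_mul, i2val] at this

lemma main_bound (c d M₁ M₂ r : ℝ) (hc : -1 < c) (hd : d < -1)
    (hM₁ : 0 ≤ M₁) (hM₂ : 0 ≤ M₂) (hr : 0 < r)
    (g : ℝ → ℝ) (hmeas : AEStronglyMeasurable g volume)
    (h1 : ∀ t : ℝ, t ≠ 0 → t ∈ Ioo (-r) r → |g t| ≤ M₁ * |t| ^ c)
    (h2 : ∀ t : ℝ, t ∈ (Ioo (-r) r)ᶜ → |g t| ≤ M₂ * |t| ^ d) :
    Integrable g ∧ |∫ t : ℝ, g t| ≤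
      M₁ * (2 * (r ^ (c + 1) / (c + 1))) + M₂ * (2 * (r ^ (d + 1) / (-(d + 1)))) := by
  obtain ⟨i1int, i1val⟩ := i1 c r hc hr
  obtain ⟨i2int, i2val⟩ := i2 d r hd hr
  have hb1 : ∀ᵐ t ∂(volume.restrict (Ioo (-r) r)), ‖g t‖ ≤ M₁ * |t| ^ c := by
    filter_upwards [ae_restrict_mem measurableSet_Ioo, ae_restrict_of_ae ae_ne_zero]
      with t ht ht0
    rw [Real.norm_eq_abs]; exact h1 t ht0 ht
  have hb2 : ∀ᵐ t ∂(volume.restrict (Ioo (-r) r)ᶜ), ‖g t‖ ≤ M₂ * |t| ^ d := by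
    filter_upwards [ae_restrict_mem measurableSet_Ioo.compl] with t ht
    rw [Real.norm_eq_abs]; exact h2 t ht
  have hintIoo : IntegrableOn g (Ioo (-r) r) :=
    Integrable.mono' (i1int.const_mul M₁) hmeas.restrict hb1
  have hintC : IntegrableOn g (Ioo (-r) r)ᶜ :=
    Integrable.mono' (i2int.const_mul M₂) hmeas.restrict hb2
  have hint : Integrable g := by
    have := hintIoo.union hintC
    rw [union_compl_self] at this
    exact integrableOn_univ.1 this
  refine ⟨hint, ?_⟩
  rw [← integral_add_compl measurableSet_Ioo hint]
  have e1 : |∫ t in Ioo (-r) r, g t| ≤ M₁ * (2 * (r ^ (c + 1) / (c + 1))) := by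
    have := norm_integral_le_of_norm_le ((i1int.const_mul M₁)) hb1
    rw [Real.norm_eq_abs] at this
    rwa [integral_const_mul, i1val] at this
  have e2 : |∫ t in (Ioo (-r) r)ᶜ, g t| ≤ M₂ * (2 * (r ^ (d + 1) / (-(d + 1)))) := by
    have := norm_integral_le_of_norm_le ((i2int.const_mul M₂)) hb2
    rw [Real.norm_eq_abs] at this
    rwa [integral_const_mul, i2val] at this
  calc |(∫ t in Ioo (-r) r, g t) + ∫ t in (Ioo (-r) r)ᶜ, g t|
      ≤ |∫ t in Ioo (-r) r, g t| + |∫ t in (Ioo (-r) r)ᶜ, g t| := abs_add_le _ _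
  _ ≤ _ := add_le_add e1 e2

set_option maxHeartbeats 1000000 in
/-- **The quasilinear operator `Φ₁` is well defined and sends `C^{1,β}` into `C^{0,β−α}`.**
For `0 < α < β < 1` and any bound `B`, there is a constant `C` (depending only on `α, β, B`)
such that: for every `a` and every `2π`-periodic `C^{1,β}` function `φ` with
`|a| + ‖φ‖_{C^{1,β}} ≤ B`, the integrand of `Φ₁(a,φ)(s)` is Lebesgue integrable in `t` for
every `s`, `‖Φ₁(a,φ)‖_∞ ≤ C`, and `|Φ₁(a,φ)(s) − Φ₁(a,φ)(s̄)| ≤ C|s−s̄|^{β−α}` for all `s, s̄`. -/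
theorem Phi1_well_defined_and_Holder
    (α β : ℝ) (hα : 0 < α) (hαβ : α < β) (hβ : β < 1) (B : ℝ) :
    ∃ C : ℝ, ∀ (a : ℝ) (φ : ℝ → ℝ) (K₀ K₁ K₂ : ℝ),
      Function.Periodic φ (2 * π) → ContDiff ℝ 1 φ →
      (∀ s, |φ s| ≤ K₀) → (∀ s, |deriv φ s| ≤ K₁) →
      (∀ s s', |deriv φ s - deriv φ s'| ≤ K₂ * |s - s'| ^ β) →
      |a| + K₀ + K₁ + K₂ ≤ B →
      (∀ s : ℝ, Integrable (fun t : ℝ => Phi1Integrand α a φ s t)) ∧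
      (∀ s : ℝ, |Phi1 α a φ s| ≤ C) ∧
      (∀ s s' : ℝ, |Phi1 α a φ s - Phi1 α a φ s'| ≤ C * |s - s'| ^ (β - α)) := by
  have hβα : (0:ℝ) < β - α := by linarith
  have h1αβ : (0:ℝ) < 1 + α - β := by linarith
  have h1α : (0:ℝ) < 1 + α := by linarith
  set B' : ℝ := max B 0 with hB'def
  have hB'0 : (0:ℝ) ≤ B' := le_max_right _ _
  set D' : ℝ := 2 * B' + 8 * (2 + α) * B' * B' * B' with hD'def
  have hD'0 : (0:ℝ) ≤ D' := by
    have h3 : (0:ℝ) ≤ B' * B' * B' := by positivity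
    rw [hD'def]; nlinarith
  set Cs : ℝ := (1/2) * (B' * (2 * (1 / (β - α))) + (4 * B') * (2 * (1 / (1 + α)))) with hCsdef
  set Ch : ℝ := (1/2) * (2 * (B' * (2 * (1 / (β - α)))) + D' * (2 * (1 / (1 + α - β)))) with hChdef
  have hCs0 : (0:ℝ) ≤ Cs := by
    have e1 : (0:ℝ) < 1 / (β - α) := by positivity
    have e2 : (0:ℝ) < 1 / (1 + α) := by positivity
    rw [hCsdef]; nlinarith
  have hCh0 : (0:ℝ) ≤ Ch := by
    have e1 : (0:ℝ) < 1 / (β - α) := by positivity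
    have e3 : (0:ℝ) < 1 / (1 + α - β) := by positivity
    rw [hChdef]; nlinarith
  refine ⟨Cs + Ch, ?_⟩
  intro a φ K₀ K₁ K₂ hper hφ hK₀ hK₁ hK₂ hB
  clear hper
  have hK₀0 : 0 ≤ K₀ := (abs_nonneg _).trans (hK₀ 0)
  have hK₁0 : 0 ≤ K₁ := (abs_nonneg _).trans (hK₁ 0)
  have hK₂0 : 0 ≤ K₂ := by
    have h := hK₂ 1 0
    rw [show (1:ℝ) - 0 = 1 by norm_num, abs_one, Real.one_rpow, mul_one] at h
    exact (abs_nonneg _).trans h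
  have hBB' : B ≤ B' := le_max_left _ _
  have haB : |a| ≤ B' := by linarith
  have hK₀B : K₀ ≤ B' := by linarith [abs_nonneg a]
  have hK₁B : K₁ ≤ B' := by linarith [abs_nonneg a]
  have hK₂B : K₂ ≤ B' := by linarith [abs_nonneg a]
  have hF3le : ∀ q p, |F3 α a q p| ≤ 1 := fun q p => F3_abs_le_one α a q p hα
  have habs_pos : ∀ t : ℝ, t ≠ 0 → (0:ℝ) < |t| := fun t ht => abs_pos.2 ht
  -- pointwise bounds on the sum of quotients
  have hsumβ : ∀ s t : ℝ, t ≠ 0 → |deltaMinus φ s t + deltaPlus φ s t| ≤ K₂ * |t| ^ β := by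
    intro s t ht
    have h2 := second_diff_bound φ hφ K₂ β hK₂ s t
    rw [deltaMinus, deltaPlus, ← add_div, abs_div, abs_abs,
      div_le_iff₀ (habs_pos t ht)]
    exact h2
  have hsum₀ : ∀ s t : ℝ, t ≠ 0 →
      |deltaMinus φ s t + deltaPlus φ s t| ≤ (4 * K₀) * |t|⁻¹ := by
    intro s t ht
    rw [deltaMinus, deltaPlus, ← add_div, abs_div, abs_abs, div_eq_mul_inv]
    apply mul_le_mul_of_nonneg_right _ (inv_nonneg.2 (abs_nonneg t))
    have e1 := abs_sub (φ s) (φ (s - t))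
    have e2 := abs_sub (φ s) (φ (s + t))
    calc |φ s - φ (s - t) + (φ s - φ (s + t))|
        ≤ |φ s - φ (s - t)| + |φ s - φ (s + t)| := abs_add_le _ _
      _ ≤ 4 * K₀ := by
          have b1 : |φ s - φ (s - t)| ≤ |φ s| + |φ (s - t)| := abs_sub _ _
          have b2 : |φ s - φ (s + t)| ≤ |φ s| + |φ (s + t)| := abs_sub _ _
          linarith [hK₀ s, hK₀ (s - t), hK₀ (s + t)]
  -- pointwise bounds on differences of quotients
  have hdminus : ∀ s s' t : ℝ, t ≠ 0 →
      |deltaMinus φ s t - deltaMinus φ s' t| ≤ 2 * K₁ * |s - s'| / |t| := by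
    intro s s' t ht
    rw [deltaMinus, deltaMinus, div_sub_div_same, abs_div, abs_abs,
      div_le_div_iff_of_pos_right (habs_pos t ht)]
    exact first_diff_bound φ hφ (2 * K₁) t
      (fun u => by
        have b1 : |deriv φ u - deriv φ (u - t)| ≤ |deriv φ u| + |deriv φ (u - t)| := abs_sub _ _
        linarith [hK₁ u, hK₁ (u - t)]) s s'
  have hdplus : ∀ s s' t : ℝ, t ≠ 0 →
      |deltaPlus φ s t - deltaPlus φ s' t| ≤ 2 * K₁ * |s - s'| / |t| := by
    intro s s' t ht
    rw [deltaPlus, deltaPlus, div_sub_div_same, abs_div, abs_abs,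
      div_le_div_iff_of_pos_right (habs_pos t ht)]
    have h := first_diff_bound φ hφ (2 * K₁) (-t)
      (fun u => by
        have b1 : |deriv φ u - deriv φ (u - -t)| ≤ |deriv φ u| + |deriv φ (u - -t)| := abs_sub _ _
        linarith [hK₁ u, hK₁ (u - -t)]) s s'
    simpa [sub_neg_eq_add] using h
  have hdminusβ : ∀ s s' t : ℝ, t ≠ 0 →
      |deltaMinus φ s t - deltaMinus φ s' t| ≤ K₂ * |t| ^ β * |s - s'| / |t| := by
    intro s s' t ht
    rw [deltaMinus, deltaMinus, div_sub_div_same, abs_div, abs_abs,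
      div_le_div_iff_of_pos_right (habs_pos t ht)]
    exact first_diff_bound φ hφ (K₂ * |t| ^ β) t
      (fun u => by
        have := hK₂ u (u - t)
        simpa using this) s s'
  have hdplusβ : ∀ s s' t : ℝ, t ≠ 0 →
      |deltaPlus φ s t - deltaPlus φ s' t| ≤ K₂ * |t| ^ β * |s - s'| / |t| := by
    intro s s' t ht
    rw [deltaPlus, deltaPlus, div_sub_div_same, abs_div, abs_abs,
      div_le_div_iff_of_pos_right (habs_pos t ht)]
    have h := first_diff_bound φ hφ (K₂ * |t| ^ β) (-t)
      (fun u => by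
        have := hK₂ u (u - -t)
        simpa [abs_neg] using this) s s'
    simpa [sub_neg_eq_add] using h
  -- pointwise bounds on the integrand
  have hpt1 : ∀ s t : ℝ, t ≠ 0 → |Phi1Integrand α a φ s t| ≤ K₂ * |t| ^ (β - 1 - α) := by
    intro s t ht
    have hT := habs_pos t ht
    have hw0 : (0:ℝ) ≤ |t| ^ (-(1 + α)) := Real.rpow_nonneg (abs_nonneg t) _
    have hβ0 : (0:ℝ) ≤ |t| ^ β := Real.rpow_nonneg (abs_nonneg t) _
    rw [Phi1Integrand, abs_mul, abs_mul, abs_of_nonneg hw0]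
    calc |deltaMinus φ s t + deltaPlus φ s t| * |F3 α a (deltaMinus φ s t) (deltaPlus φ s t)| *
          |t| ^ (-(1 + α))
        ≤ (K₂ * |t| ^ β) * 1 * |t| ^ (-(1 + α)) := by
          apply mul_le_mul_of_nonneg_right _ hw0
          exact mul_le_mul (hsumβ s t ht) (hF3le _ _) (abs_nonneg _) (mul_nonneg hK₂0 hβ0)
      _ = K₂ * |t| ^ (β - 1 - α) := by
          rw [mul_one, mul_assoc, ← Real.rpow_add hT,
            show β + -(1 + α) = β - 1 - α from by ring]
  have hpt2 : ∀ s t : ℝ, t ≠ 0 → |Phi1Integrand α a φ s t| ≤ (4 * K₀) * |t| ^ (-2 - α) := by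
    intro s t ht
    have hT := habs_pos t ht
    have hw0 : (0:ℝ) ≤ |t| ^ (-(1 + α)) := Real.rpow_nonneg (abs_nonneg t) _
    rw [Phi1Integrand, abs_mul, abs_mul, abs_of_nonneg hw0]
    calc |deltaMinus φ s t + deltaPlus φ s t| * |F3 α a (deltaMinus φ s t) (deltaPlus φ s t)| *
          |t| ^ (-(1 + α))
        ≤ ((4 * K₀) * |t|⁻¹) * 1 * |t| ^ (-(1 + α)) := by
          apply mul_le_mul_of_nonneg_right _ hw0
          exact mul_le_mul (hsum₀ s t ht) (hF3le _ _) (abs_nonneg _)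
            (mul_nonneg (by linarith) (inv_nonneg.2 (abs_nonneg t)))
      _ = (4 * K₀) * |t| ^ (-2 - α) := by
          rw [mul_one, show (|t|:ℝ)⁻¹ = |t| ^ (-1:ℝ) from (Real.rpow_neg_one |t|).symm,
            mul_assoc, ← Real.rpow_add hT, show (-1:ℝ) + -(1 + α) = -2 - α from by ring]
  have hptd : ∀ s s' t : ℝ, t ≠ 0 →
      |Phi1Integrand α a φ s t - Phi1Integrand α a φ s' t| ≤
        ((2 * K₂ + 8 * (2 + α) * |a| * K₁ * K₂) * |s - s'|) * |t| ^ (β - 2 - α) := by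
    intro s s' t ht
    have hT := habs_pos t ht
    have hw0 : (0:ℝ) ≤ |t| ^ (-(1 + α)) := Real.rpow_nonneg (abs_nonneg t) _
    have hβ0 : (0:ℝ) ≤ |t| ^ β := Real.rpow_nonneg (abs_nonneg t) _
    set A := deltaMinus φ s t + deltaPlus φ s t with hA
    set A' := deltaMinus φ s' t + deltaPlus φ s' t with hA'
    set F := F3 α a (deltaMinus φ s t) (deltaPlus φ s t) with hF
    set F' := F3 α a (deltaMinus φ s' t) (deltaPlus φ s' t) with hF'
    have hAA : |A - A'| ≤ 2 * (K₂ * |t| ^ β * |s - s'| / |t|) := by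
      rw [hA, hA', show deltaMinus φ s t + deltaPlus φ s t -
          (deltaMinus φ s' t + deltaPlus φ s' t) =
          (deltaMinus φ s t - deltaMinus φ s' t) + (deltaPlus φ s t - deltaPlus φ s' t)
          from by ring]
      have e := abs_add_le (deltaMinus φ s t - deltaMinus φ s' t)
        (deltaPlus φ s t - deltaPlus φ s' t)
      have h1 := hdminusβ s s' t ht
      have h2 := hdplusβ s s' t ht
      linarith
    have hFF : |F - F'| ≤ (2 + α) * |a| *
        (2 * (2 * K₁ * |s - s'| / |t| + 2 * K₁ * |s - s'| / |t|)) := by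
      refine (F3_lip α a hα (deltaMinus φ s t) (deltaPlus φ s t)
        (deltaMinus φ s' t) (deltaPlus φ s' t)).trans ?_
      apply mul_le_mul_of_nonneg_left _ (by positivity)
      have h1 := hdminus s s' t ht
      have h2 := hdplus s s' t ht
      linarith
    have hA'b : |A'| ≤ K₂ * |t| ^ β := hsumβ s' t ht
    have key : |A * F - A' * F'| ≤
        (2 * K₂ + 8 * (2 + α) * |a| * K₁ * K₂) * |s - s'| * (|t| ^ β * |t|⁻¹) := by
      rw [show A * F - A' * F' = (A - A') * F + A' * (F - F') from by ring]
      have e1 : |(A - A') * F + A' * (F - F')| ≤ |A - A'| * |F| + |A'| * |F - F'| := by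
        calc |(A - A') * F + A' * (F - F')| ≤ |(A - A') * F| + |A' * (F - F')| := abs_add_le _ _
          _ = |A - A'| * |F| + |A'| * |F - F'| := by rw [abs_mul, abs_mul]
      refine e1.trans ?_
      have e2 : |A - A'| * |F| ≤ 2 * (K₂ * |t| ^ β * |s - s'| / |t|) * 1 :=
        mul_le_mul hAA (hF3le _ _) (abs_nonneg _) (by positivity)
      have e3 : |A'| * |F - F'| ≤ (K₂ * |t| ^ β) *
          ((2 + α) * |a| * (2 * (2 * K₁ * |s - s'| / |t| + 2 * K₁ * |s - s'| / |t|))) :=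
        mul_le_mul hA'b hFF (abs_nonneg _) (mul_nonneg hK₂0 hβ0)
      have efin : 2 * (K₂ * |t| ^ β * |s - s'| / |t|) * 1 + (K₂ * |t| ^ β) *
          ((2 + α) * |a| * (2 * (2 * K₁ * |s - s'| / |t| + 2 * K₁ * |s - s'| / |t|))) =
          (2 * K₂ + 8 * (2 + α) * |a| * K₁ * K₂) * |s - s'| * (|t| ^ β * |t|⁻¹) := by
        field_simp
        ring
      linarith
    have unf : Phi1Integrand α a φ s t - Phi1Integrand α a φ s' t =
        (A * F - A' * F') * |t| ^ (-(1 + α)) := by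
      rw [Phi1Integrand, Phi1Integrand, hA, hA', hF, hF']; ring
    rw [unf, abs_mul, abs_of_nonneg hw0]
    calc |A * F - A' * F'| * |t| ^ (-(1 + α))
        ≤ ((2 * K₂ + 8 * (2 + α) * |a| * K₁ * K₂) * |s - s'| * (|t| ^ β * |t|⁻¹)) *
            |t| ^ (-(1 + α)) := mul_le_mul_of_nonneg_right key hw0
      _ = ((2 * K₂ + 8 * (2 + α) * |a| * K₁ * K₂) * |s - s'|) * |t| ^ (β - 2 - α) := by
          rw [show (|t|:ℝ)⁻¹ = |t| ^ (-1:ℝ) from (Real.rpow_neg_one |t|).symm,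
            ← Real.rpow_add hT, mul_assoc, ← Real.rpow_add hT,
            show β + -1 + -(1 + α) = β - 2 - α from by ring]
  -- measurability
  have hmeas : ∀ s : ℝ, AEStronglyMeasurable (fun t : ℝ => Phi1Integrand α a φ s t) volume := by
    intro s
    apply aesm_of_contOn
    have hφc : Continuous φ := hφ.continuous
    have hne : ∀ t ∈ ({(0:ℝ)}ᶜ : Set ℝ), |t| ≠ 0 := fun t ht => abs_ne_zero.2 ht
    have habsC : ContinuousOn (fun t : ℝ => |t|) {(0:ℝ)}ᶜ := continuous_abs.continuousOn
    have hdm : ContinuousOn (fun t : ℝ => deltaMinus φ s t) {(0:ℝ)}ᶜ := by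
      simp only [deltaMinus]
      exact ContinuousOn.div
        (continuous_const.sub (hφc.comp (continuous_const.sub continuous_id))).continuousOn
        habsC hne
    have hdp : ContinuousOn (fun t : ℝ => deltaPlus φ s t) {(0:ℝ)}ᶜ := by
      simp only [deltaPlus]
      exact ContinuousOn.div
        (continuous_const.sub (hφc.comp (continuous_const.add continuous_id))).continuousOn
        habsC hne
    have hF : ContinuousOn
        (fun t : ℝ => F3 α a (deltaMinus φ s t) (deltaPlus φ s t)) {(0:ℝ)}ᶜ := by
      have := (F3_cont α a hα).comp_continuousOn (hdm.prodMk hdp)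
      simpa [Function.comp_def] using this
    have hpow : ContinuousOn (fun t : ℝ => |t| ^ (-(1 + α))) {(0:ℝ)}ᶜ := fun t ht =>
      ((continuous_abs.continuousAt).rpow_const (Or.inl (hne t ht))).continuousWithinAt
    simp only [Phi1Integrand]
    exact ((hdm.add hdp).mul hF).mul hpow
  -- integrability and global bound
  have hmain : ∀ s : ℝ, Integrable (fun t : ℝ => Phi1Integrand α a φ s t) ∧
      |∫ t : ℝ, Phi1Integrand α a φ s t| ≤
        K₂ * (2 * ((1:ℝ) ^ ((β - 1 - α) + 1) / ((β - 1 - α) + 1))) +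
        (4 * K₀) * (2 * ((1:ℝ) ^ ((-2 - α) + 1) / (-((-2 - α) + 1)))) := by
    intro s
    refine main_bound (β - 1 - α) (-2 - α) K₂ (4 * K₀) 1 (by linarith) (by linarith)
      hK₂0 (by linarith) one_pos _ (hmeas s) (fun t ht _ => hpt1 s t ht) (fun t htc => ?_)
    refine hpt2 s t (fun h0 => htc ?_)
    rw [h0]; exact ⟨by norm_num, by norm_num⟩
  refine ⟨fun s => (hmain s).1, ?_, ?_⟩
  · -- uniform bound
    intro s
    have h := (hmain s).2
    rw [Real.one_rpow, Real.one_rpow, show (β - 1 - α) + 1 = β - α from by ring,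
      show -((-2 - α) + 1) = 1 + α from by ring] at h
    have m1 : K₂ * (2 * (1 / (β - α))) ≤ B' * (2 * (1 / (β - α))) :=
      mul_le_mul_of_nonneg_right hK₂B (by positivity)
    have m2 : (4 * K₀) * (2 * (1 / (1 + α))) ≤ (4 * B') * (2 * (1 / (1 + α))) :=
      mul_le_mul_of_nonneg_right (by linarith) (by positivity)
    calc |Phi1 α a φ s| = (1 / 2) * |∫ t : ℝ, Phi1Integrand α a φ s t| := by
          rw [Phi1, abs_mul, abs_of_nonneg (by norm_num : (0:ℝ) ≤ 1 / 2)]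
      _ ≤ (1 / 2) * (K₂ * (2 * (1 / (β - α))) + (4 * K₀) * (2 * (1 / (1 + α)))) :=
          mul_le_mul_of_nonneg_left h (by norm_num)
      _ ≤ Cs := by rw [hCsdef]; linarith
      _ ≤ Cs + Ch := by linarith
  · -- Hölder seminorm bound
    intro s s'
    rcases eq_or_ne s s' with rfl | hne
    · simp [Real.zero_rpow hβα.ne']
    set Dk : ℝ := 2 * K₂ + 8 * (2 + α) * |a| * K₁ * K₂ with hDkdef
    have hDk0 : 0 ≤ Dk := by
      have p0 : 0 ≤ |a| * K₁ * K₂ := by positivity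
      have p0' : 0 ≤ 8 * (2 + α) * (|a| * K₁ * K₂) :=
        mul_nonneg (by linarith) p0
      rw [hDkdef]; linarith
    have hDD' : Dk ≤ D' := by
      have q1 : |a| * K₁ ≤ B' * B' := mul_le_mul haB hK₁B hK₁0 hB'0
      have p1 : |a| * K₁ * K₂ ≤ B' * B' * B' :=
        mul_le_mul q1 hK₂B hK₂0 (mul_nonneg hB'0 hB'0)
      have p2 : 8 * (2 + α) * (|a| * K₁ * K₂) ≤ 8 * (2 + α) * (B' * B' * B') :=
        mul_le_mul_of_nonneg_left p1 (by linarith)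
      rw [hDkdef, hD'def]; linarith
    set r : ℝ := |s - s'| with hrdef
    have hr : 0 < r := abs_pos.2 (sub_ne_zero.2 hne)
    have hP0 : 0 ≤ r ^ (β - α) := Real.rpow_nonneg hr.le _
    have hgs := (hmain s).1
    have hgs' := (hmain s').1
    have hsplit : Phi1 α a φ s - Phi1 α a φ s' = (1 / 2) *
        (((∫ t in Ioo (-r) r, Phi1Integrand α a φ s t) -
          ∫ t in Ioo (-r) r, Phi1Integrand α a φ s' t) +
         ∫ t in (Ioo (-r) r)ᶜ, (Phi1Integrand α a φ s t - Phi1Integrand α a φ s' t)) := by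
      rw [Phi1, Phi1, ← mul_sub]
      congr 1
      rw [integral_sub hgs.integrableOn hgs'.integrableOn,
        ← integral_add_compl measurableSet_Ioo hgs, ← integral_add_compl measurableSet_Ioo hgs']
      ring
    have b1 : |∫ t in Ioo (-r) r, Phi1Integrand α a φ s t| ≤
        K₂ * (2 * (r ^ ((β - 1 - α) + 1) / ((β - 1 - α) + 1))) :=
      bound_on_Ioo (β - 1 - α) K₂ r (by linarith) hK₂0 hr _ (fun t ht => hpt1 s t ht)
        hgs.integrableOn
    have b1' : |∫ t in Ioo (-r) r, Phi1Integrand α a φ s' t| ≤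
        K₂ * (2 * (r ^ ((β - 1 - α) + 1) / ((β - 1 - α) + 1))) :=
      bound_on_Ioo (β - 1 - α) K₂ r (by linarith) hK₂0 hr _ (fun t ht => hpt1 s' t ht)
        hgs'.integrableOn
    have b2 : |∫ t in (Ioo (-r) r)ᶜ, (Phi1Integrand α a φ s t - Phi1Integrand α a φ s' t)| ≤
        (Dk * r) * (2 * (r ^ ((β - 2 - α) + 1) / (-((β - 2 - α) + 1)))) := by
      refine bound_on_compl (β - 2 - α) (Dk * r) r (by linarith) (mul_nonneg hDk0 hr.le) hr _
        (fun t htc => ?_) ((hgs.sub hgs').integrableOn)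
      have ht : t ≠ 0 := fun h0 => htc (by rw [h0]; exact ⟨by linarith, by linarith⟩)
      have := hptd s s' t ht
      rw [← hrdef] at this
      simpa [hDkdef, mul_assoc] using this
    rw [show (β - 1 - α) + 1 = β - α from by ring] at b1 b1'
    rw [show (β - 2 - α) + 1 = β - 1 - α from by ring,
      show -(β - 1 - α) = 1 + α - β from by ring] at b2
    have hrr : r * r ^ (β - 1 - α) = r ^ (β - α) := by
      rw [show β - α = 1 + (β - 1 - α) from by ring, Real.rpow_add hr, Real.rpow_one]
    have t2eq : (Dk * r) * (2 * (r ^ (β - 1 - α) / (1 + α - β))) =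
        (Dk * (2 * (1 / (1 + α - β)))) * r ^ (β - α) := by
      rw [← hrr]; ring
    have habs2 : |Phi1 α a φ s - Phi1 α a φ s'| ≤ (1 / 2) *
        (K₂ * (2 * (r ^ (β - α) / (β - α))) + K₂ * (2 * (r ^ (β - α) / (β - α))) +
          (Dk * r) * (2 * (r ^ (β - 1 - α) / (1 + α - β)))) := by
      rw [hsplit, abs_mul, abs_of_nonneg (by norm_num : (0:ℝ) ≤ 1 / 2)]
      apply mul_le_mul_of_nonneg_left _ (by norm_num)
      have e0 := abs_add_le ((∫ t in Ioo (-r) r, Phi1Integrand α a φ s t) -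
          ∫ t in Ioo (-r) r, Phi1Integrand α a φ s' t)
        (∫ t in (Ioo (-r) r)ᶜ, (Phi1Integrand α a φ s t - Phi1Integrand α a φ s' t))
      have e1 := abs_sub (∫ t in Ioo (-r) r, Phi1Integrand α a φ s t)
        (∫ t in Ioo (-r) r, Phi1Integrand α a φ s' t)
      linarith
    have m1 : K₂ * (2 * (1 / (β - α))) ≤ B' * (2 * (1 / (β - α))) :=
      mul_le_mul_of_nonneg_right hK₂B (by positivity)
    have m2 : Dk * (2 * (1 / (1 + α - β))) ≤ D' * (2 * (1 / (1 + α - β))) :=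
      mul_le_mul_of_nonneg_right hDD' (by positivity)
    have hcoef : (1 / 2) * (2 * (K₂ * (2 * (1 / (β - α)))) + Dk * (2 * (1 / (1 + α - β)))) ≤
        Ch := by rw [hChdef]; linarith
    calc |Phi1 α a φ s - Phi1 α a φ s'|
        ≤ (1 / 2) * (K₂ * (2 * (r ^ (β - α) / (β - α))) + K₂ * (2 * (r ^ (β - α) / (β - α))) +
            (Dk * r) * (2 * (r ^ (β - 1 - α) / (1 + α - β)))) := habs2
      _ = ((1 / 2) * (2 * (K₂ * (2 * (1 / (β - α)))) + Dk * (2 * (1 / (1 + α - β))))) *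
            r ^ (β - α) := by rw [t2eq]; ring
      _ ≤ Ch * r ^ (β - α) := mul_le_mul_of_nonneg_right hcoef hP0
      _ ≤ (Cs + Ch) * r ^ (β - α) := mul_le_mul_of_nonneg_right (by linarith) hP0
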